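/- For every k ≥ 1, the edge set of the hypercube Q_{2k} can be partitioned into k pairwise edge-disjoint spanning trees together with a matching of size k (k pairwise non-adjacent edges). -/

import Mathlib

open SimpleGraph Function

namespace HypDecomp

variable {V : Type*}

/-- The graph determined by a parent function. -/
def parentGraph (p : V → V) : SimpleGraph V where
  Adj x y := x ≠ y ∧ (p x = y ∨ p y = x)
  symm := by refine ⟨?_⟩; rintro x y ⟨h, h'⟩; exact ⟨h.symm, h'.symm⟩
  loopless := ⟨fun x h => h.1 rfl⟩

lemma parentGraph_adj (p : V → V) {x y : V} :
    (parentGraph p).Adj x y ↔ x ≠ y ∧ (p x = y ∨ p y = x) := Iff.rfl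

lemma mem_support_rotate [DecidableEq V] {G : SimpleGraph V} {v u y : V} (c : G.Walk v v)
    (h : u ∈ c.support) : y ∈ (c.rotate u h).support ↔ y ∈ c.support := by
  rw [Walk.rotate, Walk.mem_support_append_iff, or_comm, ← Walk.mem_support_append_iff,
    Walk.take_spec]

lemma parentGraph_isAcyclic [DecidableEq V] (p : V → V) (μ : V → ℕ) (root : V)
    (hroot : p root = root) (hdec : ∀ v, v ≠ root → μ (p v) < μ v) :
    (parentGraph p).IsAcyclic := by
  intro v c hc
  -- parent relation on adjacency
  have hadj : ∀ x y : V, (parentGraph p).Adj x y → p x = y ∨ p y = x := fun x y h => h.2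
  have hdec' : ∀ x y : V, (parentGraph p).Adj x y → p x = y → μ y < μ x := by
    intro x y h hp
    rcases eq_or_ne x root with rfl | hx
    · exact absurd (hroot.symm.trans hp) h.1
    · exact hp ▸ hdec x hx
  -- pick a support vertex with maximal μ
  have hsupnp : c.support.toFinset.Nonempty := by
    simp [List.toFinset_nonempty_iff]
  obtain ⟨x, hxmem, hxmax⟩ := Finset.exists_max_image c.support.toFinset μ hsupnp
  simp only [List.mem_toFinset] at hxmem
  have hmax : ∀ y ∈ c.support, μ y ≤ μ x := by
    intro y hy; exact hxmax y (List.mem_toFinset.2 hy)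
  -- rotate the cycle to start at x
  set c' := c.rotate x hxmem with hc'def
  have hc' : c'.IsCycle := hc.rotate hxmem
  have hmemc' : ∀ y, y ∈ c'.support → y ∈ c.support := by
    intro y hy; rwa [mem_support_rotate] at hy
  clear_value c'
  clear hc hc'def
  -- destructure
  cases c' with
  | nil => exact hc'.ne_nil rfl
  | @cons _ a _ hxa q =>
    have hlen : 3 ≤ q.length + 1 := by simpa using hc'.three_le_length
    obtain ⟨hqpath, -⟩ := (Walk.cons_isCycle_iff q hxa).mp hc'
    -- destructure the reverse of q to find the other neighbor of x
    have hqrev : q.reverse.IsPath := hqpath.reverse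
    have hqrlen : 2 ≤ q.reverse.length := by rw [Walk.length_reverse]; omega
    cases hqr : q.reverse with
    | nil => rw [hqr] at hqrlen; simp at hqrlen
    | @cons _ b _ hxb r =>
      rw [hqr] at hqrev hqrlen
      obtain ⟨hrpath, hxns⟩ := (Walk.cons_isPath_iff hxb r).mp hqrev
      have hba : b ≠ a := by
        rintro rfl
        have : r = Walk.nil := (Walk.isPath_iff_eq_nil (p := r)).mp hrpath
        rw [this] at hqrlen; simp at hqrlen
      -- memberships
      have hamem : a ∈ c.support := hmemc' a (by simp [Walk.support_cons])
      have hbmem : b ∈ c.support := by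
        apply hmemc'
        have : b ∈ q.support := by
          have : b ∈ q.reverse.support := by rw [hqr]; simp [Walk.support_cons]
          rwa [Walk.support_reverse, List.mem_reverse] at this
        simp [Walk.support_cons, this]
      -- the two neighbors of x
      have h1 : p x = a := by
        rcases hadj x a hxa with h | h
        · exact h
        · exact absurd (hmax a hamem) (by have := hdec' a x hxa.symm h; omega)
      have h2 : p x = b := by
        rcases hadj x b hxb with h | h
        · exact h
        · exact absurd (hmax b hbmem) (by have := hdec' b x hxb.symm h; omega)
      exact hba (h2.symm.trans h1)

lemma parentGraph_connected [DecidableEq V] (p : V → V) (μ : V → ℕ) (root : V)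
    (hroot : p root = root) (hdec : ∀ v, v ≠ root → μ (p v) < μ v) :
    (parentGraph p).Connected := by
  rw [connected_iff]
  have key : ∀ n v, μ v ≤ n → (parentGraph p).Reachable v root := by
    intro n
    induction n with
    | zero =>
      intro v h
      rcases eq_or_ne v root with rfl | hv
      · exact Reachable.refl _
      · exact absurd (hdec v hv) (by omega)
    | succ n ih =>
      intro v h
      rcases eq_or_ne v root with rfl | hv
      · exact Reachable.refl _
      · have hd := hdec v hv
        have hadj : (parentGraph p).Adj v (p v) := ⟨fun e => by rw [← e] at hd; omega, Or.inl rfl⟩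
        exact hadj.reachable.trans (ih (p v) (by omega))
  refine ⟨fun u v => ?_, ⟨root⟩⟩
  exact (key (μ u) u le_rfl).trans (key (μ v) v le_rfl).symm

lemma parentGraph_isTree [DecidableEq V] (p : V → V) (μ : V → ℕ) (root : V)
    (hroot : p root = root) (hdec : ∀ v, v ≠ root → μ (p v) < μ v) :
    (parentGraph p).IsTree :=
  ⟨parentGraph_connected p μ root hroot hdec, parentGraph_isAcyclic p μ root hroot hdec⟩


set_option linter.unusedSectionVars false

/-! ### ZMod 4 line-step gadgets -/

/-- Rank along the path obtained by deleting edge `{s, s+1}` from the 4-cycle. -/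
def rho (s p : ZMod 4) : ℕ := (p - s - 1).val

/-- One step along the path (omitted edge `{s,s+1}`) from `p` towards `h`. -/
def step4 (s h p : ZMod 4) : ZMod 4 := if rho s p < rho s h then p + 1 else p - 1

/-- Distance to `h` along the path. -/
def dist4 (s h p : ZMod 4) : ℕ := (rho s p - rho s h) + (rho s h - rho s p)

lemma dist4_le (s h p : ZMod 4) : dist4 s h p ≤ 3 := by revert s h p; decide

lemma dist4_step (s h p : ZMod 4) (hp : p ≠ h) :
    dist4 s h (step4 s h p) < dist4 s h p := by revert s h p; decide

/-- the moved edge is a legitimate (non-omitted) path edge -/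
lemma step4_edge (s h p : ZMod 4) (hp : p ≠ h) :
    (step4 s h p = p + 1 ∧ p ≠ s) ∨ (step4 s h p = p - 1 ∧ p - 1 ≠ s) := by
  revert s h p; decide

/-- every non-omitted edge `{p, p+1}` of the line is a step-edge for one of its endpoints -/
lemma step4_cover (s h p : ZMod 4) (hp : p ≠ s) :
    (p ≠ h ∧ step4 s h p = p + 1) ∨ (p + 1 ≠ h ∧ step4 s h (p + 1) = p) := by
  revert s h p; decide

lemma zmod4_val_sub_one (a : ZMod 4) (h : a ≠ 0) : (a - 1).val + 1 = a.val := by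
  revert a; decide

/-! ### cyclic betweenness in `ZMod k` -/

variable {k : ℕ} [NeZero k]

/-- `l` lies strictly between `d` and `j` going cyclically upwards from `d`. -/
def Btw (d j l : ZMod k) : Prop := l ≠ d ∧ l ≠ j ∧ (l - d).val < (j - d).val

lemma val_pos_of_ne {a b : ZMod k} (h : a ≠ b) : 0 < (a - b).val := by
  rcases Nat.eq_zero_or_pos (a - b).val with h0 | h0
  · exact absurd (sub_eq_zero.mp ((ZMod.val_eq_zero _).mp h0)) h
  · exact h0

/-- splitting identity for cyclic distances -/
lemma val_split {d j l : ZMod k} (hdj : d ≠ j) (hld : l ≠ d) (hlj : l ≠ j) :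
    (l - d).val + (j - l).val = (j - d).val ∨
    (l - d).val + (j - l).val = (j - d).val + k := by
  have hsum : (l - d) + (j - l) = j - d := by ring
  have hv : (j - d).val = ((l - d).val + (j - l).val) % k := by
    rw [← hsum, ZMod.val_add]

  have h1 : (l - d).val < k := ZMod.val_lt _
  have h2 : (j - l).val < k := ZMod.val_lt _
  rcases Nat.lt_or_ge ((l - d).val + (j - l).val) k with h | h
  · left; rw [hv, Nat.mod_eq_of_lt h]
  · right; rw [hv, Nat.mod_eq_sub_mod h, Nat.mod_eq_of_lt (by omega)]; omega

lemma btw_flip {d j l : ZMod k} (hdj : d ≠ j) (hld : l ≠ d) (hlj : l ≠ j)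
    (h : (l - d).val < (j - d).val) : (j - l).val < (j - d).val := by
  have h1 := val_pos_of_ne hld
  have h2 := val_pos_of_ne hlj.symm
  rcases val_split hdj hld hlj with hs | hs
  · omega
  · have := ZMod.val_lt (j - l)  -- contradiction case
    omega

/-! ### first nonzero coordinate after / before a direction -/

variable (w : ZMod k → ZMod 4)

lemma nxt_exists (d : ZMod k) (h : ∃ l, l ≠ d ∧ w l ≠ 0) :
    ∃ J, (J ≠ d ∧ w J ≠ 0) ∧ ∀ l, Btw d J l → w l = 0 := by
  classical
  obtain ⟨l0, hl0⟩ := h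
  have hne : (Finset.univ.filter (fun l => l ≠ d ∧ w l ≠ 0)).Nonempty :=
    ⟨l0, by simpa using hl0⟩
  obtain ⟨J, hJ, hmin⟩ := Finset.exists_min_image _ (fun l => (l - d).val) hne
  simp only [Finset.mem_filter, Finset.mem_univ, true_and] at hJ hmin
  refine ⟨J, hJ, fun l hl => ?_⟩
  by_contra hwl
  have := hmin l ⟨hl.1, hwl⟩
  have h2 := hl.2.2
  omega

lemma prv_exists (j : ZMod k) (h : ∃ l, l ≠ j ∧ w l ≠ 0) :
    ∃ D, (D ≠ j ∧ w D ≠ 0) ∧ ∀ l, Btw D j l → w l = 0 := by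
  classical
  obtain ⟨l0, hl0⟩ := h
  have hne : (Finset.univ.filter (fun l => l ≠ j ∧ w l ≠ 0)).Nonempty :=
    ⟨l0, by simpa using hl0⟩
  obtain ⟨D, hD, hmin⟩ := Finset.exists_min_image _ (fun l => (j - l).val) hne
  simp only [Finset.mem_filter, Finset.mem_univ, true_and] at hD hmin
  refine ⟨D, hD, fun l hl => ?_⟩
  by_contra hwl
  have h1 := hmin l ⟨hl.2.1, hwl⟩
  have h2 := btw_flip hD.1 hl.1 hl.2.1 hl.2.2
  omega

lemma sub_left_injective {a b c : ZMod k} (h : a - c = b - c) : a = b := by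
  have := congrArg (· + c) h; simpa using this

lemma sub_right_injective {a b c : ZMod k} (h : c - a = c - b) : a = b := by
  have := sub_right_inj.mp h; exact this

/-- canonical "next nonzero coordinate cyclically after `d`". -/
noncomputable def nxtJ (d : ZMod k) (h : ∃ l, l ≠ d ∧ w l ≠ 0) : ZMod k :=
  (nxt_exists w d h).choose

lemma nxtJ_spec (d : ZMod k) (h : ∃ l, l ≠ d ∧ w l ≠ 0) :
    (nxtJ w d h ≠ d ∧ w (nxtJ w d h) ≠ 0) ∧ ∀ l, Btw d (nxtJ w d h) l → w l = 0 :=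
  (nxt_exists w d h).choose_spec

lemma nxtJ_eq (d : ZMod k) (h : ∃ l, l ≠ d ∧ w l ≠ 0) (J : ZMod k)
    (hJ : J ≠ d ∧ w J ≠ 0) (hz : ∀ l, Btw d J l → w l = 0) : nxtJ w d h = J := by
  obtain ⟨⟨h1, h2⟩, h3⟩ := nxtJ_spec w d h
  set J' := nxtJ w d h
  by_contra hne
  have hvne : (J' - d).val ≠ (J - d).val := by
    intro e
    exact hne (sub_left_injective (ZMod.val_injective k e))
  rcases Nat.lt_or_ge ((J' - d).val) ((J - d).val) with hlt | hge
  · exact h2 (hz J' ⟨h1, hne, hlt⟩)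
  · exact hJ.2 (h3 J ⟨hJ.1, fun e => hne e.symm, by omega⟩)

/-- canonical "previous nonzero coordinate cyclically before `j`". -/
noncomputable def prvD (j : ZMod k) (h : ∃ l, l ≠ j ∧ w l ≠ 0) : ZMod k :=
  (prv_exists w j h).choose

lemma prvD_spec (j : ZMod k) (h : ∃ l, l ≠ j ∧ w l ≠ 0) :
    (prvD w j h ≠ j ∧ w (prvD w j h) ≠ 0) ∧ ∀ l, Btw (prvD w j h) j l → w l = 0 :=
  (prv_exists w j h).choose_spec

lemma prvD_eq (j : ZMod k) (h : ∃ l, l ≠ j ∧ w l ≠ 0) (D : ZMod k)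
    (hD : D ≠ j ∧ w D ≠ 0) (hz : ∀ l, Btw D j l → w l = 0) : prvD w j h = D := by
  obtain ⟨⟨h1, h2⟩, h3⟩ := prvD_spec w j h
  set D' := prvD w j h
  by_contra hne
  have hvne : (j - D').val ≠ (j - D).val := by
    intro e
    exact hne (sub_right_injective (ZMod.val_injective k e))
  -- reduce to Btw in one of the two directions, using val_split
  have key : ∀ A B : ZMod k, A ≠ j → B ≠ j → A ≠ B → (j - B).val < (j - A).val →
      Btw A j B := by
    intro A B hA hB hAB hv
    refine ⟨fun e => hAB e.symm, hB, ?_⟩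
    rcases val_split (d := A) (j := j) (l := B) hA (fun e => hAB e.symm) hB with hs | hs
    · have := val_pos_of_ne (a := j) (b := B) (fun e => hB e.symm)
      omega
    · have := ZMod.val_lt (B - A)
      omega
  rcases Nat.lt_or_ge ((j - D').val) ((j - D).val) with hlt | hge
  · exact h2 (hz D' (key D D' hD.1 h1 (by intro e; exact hvne (by rw [e])) hlt))
  · exact hD.2 (h3 D (key D' D h1 hD.1 (by intro e; exact hvne (by rw [e])) (by omega)))

/-! ### The construction on `W = ZMod k → ZMod 4` -/

section Construction

open Function

variable (k : ℕ) [NeZero k]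

abbrev Wt := ZMod k → ZMod 4

variable {k}

/-- The parent function of the `j`-th spanning tree. -/
noncomputable def par (j : ZMod k) (v : Wt k) : Wt k :=
  if h : ∃ l, l ≠ j ∧ v l ≠ 0 then
    if v j = v (prvD v j h) then
      update v (prvD v j h) (v (prvD v j h) - 1)
    else
      update v j (step4 (v (nxtJ v j h) - 1) (v (prvD v j h)) (v j))
  else
    if v j = 0 then v else update v j (step4 1 0 (v j))

lemma par_root (j : ZMod k) : par j (0 : Wt k) = 0 := by
  rw [par, dif_neg]
  · simp
  · push_neg
    intro l _
    simp

/-- weighted sum of coordinates other than `j` -/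
def colSum (j : ZMod k) (v : Wt k) : ℕ :=
  ∑ l ∈ Finset.univ.erase j, (v l).val * 4 ^ ((l - j - 1).val)

/-- the omitted-edge position and head position of the line of `v` -/
noncomputable def shp (j : ZMod k) (v : Wt k) : ZMod 4 × ZMod 4 :=
  if h : ∃ l, l ≠ j ∧ v l ≠ 0 then (v (nxtJ v j h) - 1, v (prvD v j h)) else (1, 0)

noncomputable def meas (j : ZMod k) (v : Wt k) : ℕ :=
  4 * colSum j v + dist4 (shp j v).1 (shp j v).2 (v j)

lemma colSum_update (j : ZMod k) (v : Wt k) (x : ZMod 4) :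
    colSum j (update v j x) = colSum j v := by
  unfold colSum
  refine Finset.sum_congr rfl fun l hl => ?_
  rw [update_of_ne (Finset.ne_of_mem_erase hl)]

lemma exOff_congr {j : ZMod k} {v w : Wt k} (hvw : ∀ l, l ≠ j → v l = w l) :
    (∃ l, l ≠ j ∧ v l ≠ 0) ↔ (∃ l, l ≠ j ∧ w l ≠ 0) := by
  constructor <;> rintro ⟨l, h1, h2⟩ <;> exact ⟨l, h1, by rw [hvw l h1] at * ; assumption⟩

lemma nxtJ_congr {j : ZMod k} {v w : Wt k} (hvw : ∀ l, l ≠ j → v l = w l)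
    (h : ∃ l, l ≠ j ∧ v l ≠ 0) (h' : ∃ l, l ≠ j ∧ w l ≠ 0) :
    nxtJ v j h = nxtJ w j h' := by
  obtain ⟨⟨h1, h2⟩, h3⟩ := nxtJ_spec v j h
  refine (nxtJ_eq w j h' _ ⟨h1, by rwa [← hvw _ h1]⟩ fun l hl => ?_).symm
  rw [← hvw _ hl.1]
  exact h3 l hl

lemma prvD_congr {j : ZMod k} {v w : Wt k} (hvw : ∀ l, l ≠ j → v l = w l)
    (h : ∃ l, l ≠ j ∧ v l ≠ 0) (h' : ∃ l, l ≠ j ∧ w l ≠ 0) :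
    prvD v j h = prvD w j h' := by
  obtain ⟨⟨h1, h2⟩, h3⟩ := prvD_spec v j h
  refine (prvD_eq w j h' _ ⟨h1, by rwa [← hvw _ h1]⟩ fun l hl => ?_).symm
  rw [← hvw _ hl.2.1]
  exact h3 l hl

lemma shp_update (j : ZMod k) (v : Wt k) (x : ZMod 4) :
    shp j (update v j x) = shp j v := by
  have hvw : ∀ l, l ≠ j → (update v j x) l = v l := fun l hl => update_of_ne hl _ _
  unfold shp
  by_cases h : ∃ l, l ≠ j ∧ v l ≠ 0
  · have h' : ∃ l, l ≠ j ∧ (update v j x) l ≠ 0 := (exOff_congr hvw).mpr h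
    rw [dif_pos h', dif_pos h, nxtJ_congr hvw h' h, prvD_congr hvw h' h]
    obtain ⟨⟨h1, -⟩, -⟩ := nxtJ_spec v j h
    obtain ⟨⟨h1', -⟩, -⟩ := prvD_spec v j h
    rw [hvw _ h1, hvw _ h1']
  · have h' : ¬ ∃ l, l ≠ j ∧ (update v j x) l ≠ 0 := fun c => h ((exOff_congr hvw).mp c)
    rw [dif_neg h', dif_neg h]

lemma meas_par_lt (j : ZMod k) (v : Wt k) (hv : v ≠ 0) : meas j (par j v) < meas j v := by
  by_cases h : ∃ l, l ≠ j ∧ v l ≠ 0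
  · set D := prvD v j h with hD
    obtain ⟨⟨hD1, hD2⟩, hD3⟩ := prvD_spec v j h
    rw [par, dif_pos h]
    by_cases hhead : v j = v D
    · -- connector step
      rw [if_pos (hD ▸ hhead)]
      set v' := update v D (v D - 1) with hv'
      -- colSum decreases
      have hmem : D ∈ Finset.univ.erase j := Finset.mem_erase.mpr ⟨hD1, Finset.mem_univ _⟩
      have hcs : colSum j v' + 4 ^ ((D - j - 1).val) = colSum j v := by
        unfold colSum
        rw [← Finset.add_sum_erase _ _ hmem, ← Finset.add_sum_erase _ _ hmem]
        have hrest : ∑ l ∈ (Finset.univ.erase j).erase D, (v' l).val * 4 ^ ((l - j - 1).val)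
            = ∑ l ∈ (Finset.univ.erase j).erase D, (v l).val * 4 ^ ((l - j - 1).val) := by
          refine Finset.sum_congr rfl fun l hl => ?_
          rw [hv', update_of_ne (Finset.ne_of_mem_erase hl)]
        rw [hrest]
        have : (v' D).val + 1 = (v D).val := by
          rw [hv', update_self]
          exact zmod4_val_sub_one _ hD2
        rw [← this]
        ring
      have hd1 := dist4_le (shp j v').1 (shp j v').2 (v' j)
      have hd2 : 1 ≤ 4 ^ ((D - j - 1).val) := Nat.one_le_pow _ _ (by norm_num)
      unfold meas
      omega
    · -- step within the line
      rw [if_neg (by rw [← hD]; exact hhead)]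
      set s := v (nxtJ v j h) - 1 with hs
      set p' := step4 s (v D) (v j) with hp'
      have hcs := colSum_update j v p'
      have hsh := shp_update j v p'
      have hshv : shp j v = (s, v D) := by rw [shp, dif_pos h]
      unfold meas
      rw [hcs, hsh, hshv, update_self]
      have := dist4_step s (v D) (v j) hhead
      simp only [hp']
      omega
  · rw [par, dif_neg h]
    have hj : v j ≠ 0 := by
      intro hj
      apply hv
      funext l
      by_cases hl : l = j
      · rw [hl]; exact hj
      · by_contra hc
        exact h ⟨l, hl, hc⟩
    rw [if_neg hj]
    set p' := step4 1 0 (v j) with hp'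
    have hcs := colSum_update j v p'
    have hsh := shp_update j v p'
    have hshv : shp j v = (1, 0) := by rw [shp, dif_neg h]
    unfold meas
    rw [hcs, hsh, hshv, update_self]
    have := dist4_step 1 0 (v j) hj
    dsimp only
    rw [hp']
    omega

/-- The `j`-th spanning tree. -/
noncomputable def treeG (j : ZMod k) : SimpleGraph (Wt k) := parentGraph (par j)

lemma treeG_isTree (j : ZMod k) : (treeG j).IsTree := by
  classical
  exact parentGraph_isTree (par j) (meas j) 0 (par_root j) (meas_par_lt j)

end Construction

section Partition

open Function

variable {k : ℕ} [NeZero k]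

lemma z4_step_cases (s h p : ZMod 4) : step4 s h p = p + 1 ∨ step4 s h p = p - 1 := by
  unfold step4; split <;> simp

lemma z4_ne_add_one (x : ZMod 4) : x ≠ x + 1 := by revert x; decide

lemma z4_sub_one_ne_add_one (x : ZMod 4) : x - 1 ≠ x + 1 := by revert x; decide

lemma z4_sub_add_cancel (x : ZMod 4) : x - 1 + 1 = x := by ring

/-- the `2k`-dimensional torus (cartesian power of a 4-cycle) -/
def torus : SimpleGraph (Wt k) where
  Adj x y := x ≠ y ∧ ∃ d, y = update x d (x d + 1) ∨ x = update y d (y d + 1)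
  symm := by
    refine ⟨?_⟩
    rintro x y ⟨h, d, hd⟩
    exact ⟨h.symm, d, hd.symm⟩
  loopless := ⟨fun x h => h.1 rfl⟩

lemma upd_add_sub (v : Wt k) (d : ZMod k) :
    update (update v d (v d + 1)) d (update v d (v d + 1) d - 1) = v := by
  rw [update_self, update_idem]
  simp [update_eq_self_iff]

lemma upd_sub_add (v : Wt k) (d : ZMod k) :
    update (update v d (v d - 1)) d (update v d (v d - 1) d + 1) = v := by
  rw [update_self, update_idem]
  simp [z4_sub_add_cancel, update_eq_self_iff]

lemma par_torus_adj (j : ZMod k) (v : Wt k) (hne : par j v ≠ v) : (torus).Adj v (par j v) := by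
  refine ⟨hne.symm, ?_⟩
  rw [par] at hne ⊢
  split_ifs at hne ⊢ with h hhead hz
  · -- connector: decrement at D
    exact ⟨prvD v j h, Or.inr (upd_sub_add v _).symm⟩
  · -- line step
    rcases z4_step_cases (v (nxtJ v j h) - 1) (v (prvD v j h)) (v j) with hs | hs <;> rw [hs]
    · exact ⟨j, Or.inl rfl⟩
    · exact ⟨j, Or.inr (upd_sub_add v j).symm⟩
  · exact absurd rfl hne
  · rcases z4_step_cases 1 0 (v j) with hs | hs <;> rw [hs]
    · exact ⟨j, Or.inl rfl⟩
    · exact ⟨j, Or.inr (upd_sub_add v j).symm⟩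

lemma treeG_le_torus (j : ZMod k) : treeG j ≤ (torus : SimpleGraph (Wt k)) := by
  rintro x y ⟨hxy, hp | hp⟩
  · exact hp ▸ par_torus_adj j x (hp.symm ▸ fun c => hxy c.symm)
  · exact ((hp ▸ par_torus_adj j y (hp.symm ▸ fun c => hxy c)) : (torus).Adj y x).symm

/-- matching edge in direction `d` -/
def mEdge (d : ZMod k) : Sym2 (Wt k) := s(update (0 : Wt k) d 1, update (0 : Wt k) d 2)

/-- the matching -/
def MSet : Set (Sym2 (Wt k)) := Set.range mEdge

/-- which part of the partition the edge `{a, update a d (a d + 1)}` belongs to: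
`some j` means tree `j`, `none` means the matching. -/
noncomputable def owner (a : Wt k) (d : ZMod k) : Option (ZMod k) :=
  if h : ∃ l, l ≠ d ∧ a l ≠ 0 then
    if a d = a (nxtJ a d h) - 1 then some (nxtJ a d h) else some d
  else if a d = 1 then none else some d

end Partition

section Ownership

open Function

variable {k : ℕ} [NeZero k]

lemma z4_sub_one_ne_self (x : ZMod 4) : x - 1 ≠ x := by revert x; decide

lemma step4_ne (s h p : ZMod 4) : step4 s h p ≠ p := by revert s h p; decide

/-- Every parent edge of tree `j`, written in canonical orientation, is owned by `j`. -/
lemma owner_of_par (j : ZMod k) (x : Wt k) (d : ZMod k)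
    (hp : par j x = update x d (x d + 1) ∨ par j (update x d (x d + 1)) = x) :
    owner x d = some j := by
  set y := update x d (x d + 1) with hy
  have hyd : y d = x d + 1 := update_self d _ x
  have hyl : ∀ l, l ≠ d → y l = x l := fun l hl => update_of_ne hl _ x
  rcases hp with hpar | hpar
  · -- par j x = y : upward step
    rw [par] at hpar
    split_ifs at hpar with h hhead hz
    · -- connector branch: impossible upward
      exfalso
      have := congrFun hpar (prvD x j h)
      rw [update_self] at this
      rcases eq_or_ne (prvD x j h) d with he | he
      · rw [he, hyd] at this
        exact z4_sub_one_ne_add_one (x d) (by rw [← he] at this ⊢; exact this)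
      · rw [hyl _ he] at this
        exact z4_sub_one_ne_self _ this
    · -- within-line step upward
      have hdj : d = j := by
        by_contra hdj
        have := congrFun hpar j
        rw [update_self, hyl j (fun e => hdj e.symm)] at this
        exact step4_ne _ _ _ this
      subst hdj
      have hstep : step4 (x (nxtJ x d h) - 1) (x (prvD x d h)) (x d) = x d + 1 := by
        have := congrFun hpar d
        rwa [update_self, hyd] at this
      rcases step4_edge (x (nxtJ x d h) - 1) (x (prvD x d h)) (x d) hhead with ⟨-, hs⟩ | ⟨he, -⟩
      · rw [owner, dif_pos h, if_neg hs]
      · rw [hstep] at he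
        exact absurd he.symm (z4_sub_one_ne_add_one (x d))
    · exact absurd (congrFun hpar d) (fun c => z4_ne_add_one (x d) (by rw [hyd] at c; exact c))
    · have hdj : d = j := by
        by_contra hdj
        have := congrFun hpar j
        rw [update_self, hyl j (fun e => hdj e.symm)] at this
        exact step4_ne _ _ _ this
      subst hdj
      have hstep : step4 1 0 (x d) = x d + 1 := by
        have := congrFun hpar d
        rwa [update_self, hyd] at this
      rcases step4_edge 1 0 (x d) hz with ⟨-, hs⟩ | ⟨he, -⟩
      · rw [owner, dif_neg h, if_neg hs]
      · rw [hstep] at he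
        exact absurd he.symm (z4_sub_one_ne_add_one (x d))
  · -- par j y = x : downward step
    rw [par] at hpar
    split_ifs at hpar with h hhead hz
    · -- connector branch
      obtain ⟨⟨hD1, hD2⟩, hD3⟩ := prvD_spec y j h
      have hDd : prvD y j h = d := by
        by_contra he
        have := congrFun hpar (prvD y j h)
        rw [update_self, hyl _ he] at this
        exact z4_sub_one_ne_self _ this
      have hdj : d ≠ j := hDd ▸ hD1
      have hxj : x j = x d + 1 := by
        rw [← hyl j (fun e => hdj e.symm), hhead, hDd, hyd]
      have hxj0 : x j ≠ 0 := by
        rw [← hyl j (fun e => hdj e.symm), hhead]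
        exact hD2
      have hx : ∃ l, l ≠ d ∧ x l ≠ 0 := ⟨j, fun e => hdj e.symm, hxj0⟩
      have hnxt : nxtJ x d hx = j := by
        refine nxtJ_eq x d hx j ⟨fun e => hdj e.symm, hxj0⟩ fun l hl => ?_
        rw [← hyl l hl.1]
        exact hD3 l (hDd ▸ hl)
      rw [owner, dif_pos hx, hnxt, if_pos (by rw [hxj]; ring)]
    · -- within-line step downward
      obtain ⟨⟨hJ1, hJ2⟩, hJ3⟩ := nxtJ_spec y j h
      have hdj : d = j := by
        by_contra hdj
        have := congrFun hpar j
        rw [update_self, hyl j (fun e => hdj e.symm)] at this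
        exact step4_ne _ _ _ this
      subst hdj
      have hxd : x d = y d - 1 := by rw [hyd]; ring
      have hstep : step4 (y (nxtJ y d h) - 1) (y (prvD y d h)) (y d) = y d - 1 := by
        have := congrFun hpar d
        rw [update_self] at this
        rw [this, hxd]
      rcases step4_edge (y (nxtJ y d h) - 1) (y (prvD y d h)) (y d) hhead with ⟨he, -⟩ | ⟨-, hs⟩
      · rw [hstep] at he
        exact absurd he (z4_sub_one_ne_add_one (y d))
      · -- owner computation
        have hyx : ∀ l, l ≠ d → y l = x l := hyl
        have hx : ∃ l, l ≠ d ∧ x l ≠ 0 := by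
          obtain ⟨l, hl1, hl2⟩ := h
          exact ⟨l, hl1, by rwa [← hyx l hl1]⟩
        have hnxt : nxtJ x d hx = nxtJ y d h := nxtJ_congr (fun l hl => (hyx l hl).symm) hx h
        have hsx : x (nxtJ x d hx) - 1 = y (nxtJ y d h) - 1 := by
          rw [hnxt, hyx _ hJ1]
        rw [owner, dif_pos hx, if_neg (by rw [hsx, hxd]; exact hs)]
    · exact absurd (congrFun hpar d).symm
        (fun c => z4_ne_add_one (x d) (by rw [hyd] at c; exact c))
    · have hdj : d = j := by
        by_contra hdj
        have := congrFun hpar j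
        rw [update_self, hyl j (fun e => hdj e.symm)] at this
        exact step4_ne _ _ _ this
      subst hdj
      have hxd : x d = y d - 1 := by rw [hyd]; ring
      have hstep : step4 1 0 (y d) = y d - 1 := by
        have := congrFun hpar d
        rw [update_self] at this
        rw [this, hxd]
      rcases step4_edge 1 0 (y d) hz with ⟨he, -⟩ | ⟨-, hs⟩
      · rw [hstep] at he
        exact absurd he (z4_sub_one_ne_add_one (y d))
      · have hx : ¬ ∃ l, l ≠ d ∧ x l ≠ 0 := by
          rintro ⟨l, hl1, hl2⟩
          exact h ⟨l, hl1, by rwa [hyl l hl1]⟩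
        rw [owner, dif_neg hx, if_neg (by rw [hxd]; exact hs)]
end Ownership

section Coverage

open Function

variable {k : ℕ} [NeZero k]

lemma upd_collapse (a : Wt k) (d : ZMod k) (x : ZMod 4) :
    update (update a d x) d (a d) = a := by
  rw [update_idem, update_eq_self]

/-- every torus edge (in canonical orientation) is a parent edge of its owner tree,
or a matching edge. -/
lemma owner_coverage (a : Wt k) (d : ZMod k) :
    (∃ j, owner a d = some j ∧
      (par j a = update a d (a d + 1) ∨ par j (update a d (a d + 1)) = a))
    ∨ (owner a d = none ∧ s(a, update a d (a d + 1)) ∈ (MSet : Set (Sym2 (Wt k)))) := by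
  set b := update a d (a d + 1) with hb
  have hbd : b d = a d + 1 := update_self d _ a
  have hbl : ∀ l, l ≠ d → b l = a l := fun l hl => update_of_ne hl _ a
  by_cases h : ∃ l, l ≠ d ∧ a l ≠ 0
  · obtain ⟨⟨hJ1, hJ2⟩, hJ3⟩ := nxtJ_spec a d h
    set J := nxtJ a d h with hJ
    by_cases hc : a d = a J - 1
    · -- connector edge of tree J
      left
      refine ⟨J, by rw [owner, dif_pos h, if_pos (hJ ▸ hc)], Or.inr ?_⟩
      have hbdJ : b d = a J := by rw [hbd, hc]; ring
      have h' : ∃ l, l ≠ J ∧ b l ≠ 0 := ⟨d, fun e => hJ1 e.symm, by rw [hbdJ]; exact hJ2⟩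
      rw [par, dif_pos h']
      have hprv : prvD b J h' = d := by
        refine prvD_eq b J h' d ⟨fun e => hJ1 e.symm, by rw [hbdJ]; exact hJ2⟩
          fun l hl => ?_
        rw [hbl l hl.1]
        exact hJ3 l hl
      rw [if_pos (by rw [hprv, hbl J hJ1, hbdJ])]
      rw [hprv, hb]
      exact upd_add_sub a d
    · -- within-line edge of tree d
      left
      refine ⟨d, by rw [owner, dif_pos h, if_neg (hJ ▸ hc)], ?_⟩
      obtain ⟨⟨hD1, hD2⟩, hD3⟩ := prvD_spec a d h
      set D0 := prvD a d h with hD0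
      set s0 := a J - 1 with hs0
      rcases step4_cover s0 (a D0) (a d) hc with ⟨hneh, hstep⟩ | ⟨hneh, hstep⟩
      · left
        rw [par, dif_pos h, if_neg hneh, ← hJ, ← hs0, hstep]
      · right
        have h' : ∃ l, l ≠ d ∧ b l ≠ 0 := by
          obtain ⟨l, hl1, hl2⟩ := h
          exact ⟨l, hl1, by rw [hbl l hl1]; exact hl2⟩
        have hcongr : ∀ l, l ≠ d → b l = a l := hbl
        have hnxt : nxtJ b d h' = J := by rw [hJ]; exact nxtJ_congr hcongr h' h
        have hprv : prvD b d h' = D0 := by rw [hD0]; exact prvD_congr hcongr h' h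
        rw [par, dif_pos h']
        rw [if_neg (by rw [hprv, hbl _ hD1, hbd]; exact hneh)]
        rw [hnxt, hprv, hbl _ hJ1, hbl _ hD1, ← hs0, hbd, hstep, hb]
        exact upd_collapse a d _
  · by_cases hc : a d = 1
    · right
      refine ⟨by rw [owner, dif_neg h, if_pos hc], ?_⟩
      have ha : a = update (0 : Wt k) d 1 := by
        funext l
        rcases eq_or_ne l d with rfl | hl
        · rw [update_self]; exact hc
        · rw [update_of_ne hl]
          by_contra hcon
          exact h ⟨l, hl, hcon⟩
      have hb2 : b = update (0 : Wt k) d 2 := by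
        rw [hb, ha, update_self, update_idem]
        norm_num
      exact ⟨d, by rw [mEdge, ← ha, ← hb2]⟩
    · left
      refine ⟨d, by rw [owner, dif_neg h, if_neg hc], ?_⟩
      rcases step4_cover 1 0 (a d) hc with ⟨hneh, hstep⟩ | ⟨hneh, hstep⟩
      · left
        rw [par, dif_neg h, if_neg hneh, hstep]
      · right
        have h' : ¬ ∃ l, l ≠ d ∧ b l ≠ 0 := by
          rintro ⟨l, hl1, hl2⟩
          exact h ⟨l, hl1, by rw [← hbl l hl1]; exact hl2⟩
        rw [par, dif_neg h', if_neg (by rw [hbd]; exact hneh), hbd, hstep, hb]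
        exact upd_collapse a d _

end Coverage

section Assembly

open Function

variable {k : ℕ} [NeZero k]

lemma z4_ne_add_two (x : ZMod 4) : x ≠ x + 1 + 1 := by revert x; decide

/-- canonical representations of edges are unique -/
lemma rep_unique {a a' : Wt k} {d d' : ZMod k}
    (h : s(a, update a d (a d + 1)) = s(a', update a' d' (a' d' + 1))) : a = a' ∧ d = d' := by
  rw [Sym2.eq_iff] at h
  rcases h with ⟨h1, h2⟩ | ⟨h1, h2⟩
  · refine ⟨h1, ?_⟩
    by_contra hdd
    have := congrFun h2 d
    rw [update_self, update_of_ne hdd, h1] at this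
    exact z4_ne_add_one _ this.symm
  · exfalso
    rcases eq_or_ne d d' with rfl | hdd
    · have := congrFun h1 d
      rw [update_self, ← h2, update_self] at this
      exact z4_ne_add_two (a d) this
    · have ha := congrFun h1 d
      rw [update_of_ne hdd] at ha
      have hb := congrFun h2 d
      rw [update_self] at hb
      exact z4_ne_add_one (a d) (ha.trans hb.symm)

lemma treeG_edge_rep {j : ZMod k} {e : Sym2 (Wt k)} (he : e ∈ (treeG j).edgeSet) :
    ∃ a d, e = s(a, update a d (a d + 1)) ∧ owner a d = some j := by
  induction e with
  | _ x y =>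
    obtain ⟨hxy, hpar⟩ := he
    obtain ⟨-, d, hd⟩ := treeG_le_torus j (show (treeG j).Adj x y from ⟨hxy, hpar⟩)
    rcases hd with hd | hd
    · exact ⟨x, d, by rw [hd], owner_of_par j x d (by rw [← hd]; exact hpar)⟩
    · refine ⟨y, d, by rw [hd, Sym2.eq_swap], owner_of_par j y d ?_⟩
      rw [← hd]
      exact hpar.symm

lemma owner_mEdge (d : ZMod k) : owner (update (0 : Wt k) d 1) d = none := by
  have h : ¬ ∃ l, l ≠ d ∧ (update (0 : Wt k) d 1) l ≠ 0 := by
    rintro ⟨l, hl1, hl2⟩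
    rw [update_of_ne hl1] at hl2
    exact hl2 rfl
  rw [owner, dif_neg h, if_pos (update_self d _ _)]

lemma mEdge_rep (d : ZMod k) :
    mEdge d = s(update (0 : Wt k) d 1,
      update (update (0 : Wt k) d 1) d ((update (0 : Wt k) d 1) d + 1)) := by
  rw [mEdge, update_self, update_idem]
  norm_num

lemma treeG_disjoint {i j : ZMod k} (hij : i ≠ j) :
    Disjoint (treeG i).edgeSet (treeG (k := k) j).edgeSet := by
  rw [Set.disjoint_left]
  intro e hei hej
  obtain ⟨a, d, hrep, how⟩ := treeG_edge_rep hei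
  obtain ⟨a', d', hrep', how'⟩ := treeG_edge_rep hej
  obtain ⟨rfl, rfl⟩ := rep_unique (hrep.symm.trans hrep')
  rw [how] at how'
  exact hij (Option.some_injective _ how')

lemma treeG_MSet_disjoint (j : ZMod k) :
    Disjoint (treeG (k := k) j).edgeSet MSet := by
  rw [Set.disjoint_left]
  intro e hej hem
  obtain ⟨a, d, hrep, how⟩ := treeG_edge_rep hej
  obtain ⟨d', hd'⟩ := hem
  rw [← hd', mEdge_rep d'] at hrep
  obtain ⟨rfl, rfl⟩ := rep_unique hrep
  rw [owner_mEdge] at how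
  cases how

lemma mEdge_mem_torus (d : ZMod k) : mEdge d ∈ (torus : SimpleGraph (Wt k)).edgeSet := by
  rw [mEdge_rep, mem_edgeSet]
  refine ⟨fun c => ?_, d, Or.inl rfl⟩
  have := congrFun c d
  simp only [update_self] at this
  exact absurd this (by decide)

lemma union_eq_torus :
    (⋃ j : ZMod k, (treeG j).edgeSet) ∪ MSet = (torus : SimpleGraph (Wt k)).edgeSet := by
  apply Set.Subset.antisymm
  · rintro e (he | he)
    · obtain ⟨S, ⟨j, rfl⟩, heS⟩ := he
      exact edgeSet_subset_edgeSet.mpr (treeG_le_torus j) heS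
    · obtain ⟨d, rfl⟩ := he
      exact mEdge_mem_torus d
  · intro e he
    induction e with
    | _ x y =>
      rw [mem_edgeSet] at he
      obtain ⟨hxy, d, hd⟩ := he
      have main : ∀ a : Wt k, ∀ d : ZMod k,
          s(a, update a d (a d + 1)) ∈ (⋃ j : ZMod k, (treeG j).edgeSet) ∪ MSet := by
        intro a d
        rcases owner_coverage a d with ⟨j, -, hpar⟩ | ⟨-, hmem⟩
        · refine Or.inl (Set.mem_iUnion.mpr ⟨j, ?_⟩)
          rw [mem_edgeSet]
          refine ⟨fun c => ?_, hpar⟩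
          have := congrFun c d
          rw [update_self] at this
          exact z4_ne_add_one _ this
        · exact Or.inr hmem
      rcases hd with hd | hd
      · rw [Sym2.congr_right.mpr hd]
        exact main x d
      · rw [Sym2.congr_left.mpr hd, Sym2.eq_swap]
        exact main y d

lemma mEdge_injective : Function.Injective (mEdge (k := k)) := by
  intro d d' h
  by_contra hdd
  rw [mEdge, mEdge, Sym2.eq_iff] at h
  rcases h with ⟨h1, -⟩ | ⟨h1, -⟩ <;>
  · have := congrFun h1 d
    rw [update_self, update_of_ne hdd] at this
    simp only [Pi.zero_apply] at this
    exact absurd this (by decide)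

lemma MSet_ncard : (MSet : Set (Sym2 (Wt k))).ncard = k := by
  rw [MSet, ← Set.image_univ, Set.ncard_image_of_injective _ mEdge_injective,
    Set.ncard_univ, Nat.card_zmod]

lemma upd01_ne {d d' : ZMod k} (hdd : d ≠ d') {c c' : ZMod 4} (hc : c ≠ 0) :
    update (0 : Wt k) d c ≠ update (0 : Wt k) d' c' := by
  intro h
  have := congrFun h d
  rw [update_self, update_of_ne hdd] at this
  exact hc this

lemma MSet_pairwise :
    (MSet : Set (Sym2 (Wt k))).Pairwise fun e f => ∀ v, v ∈ e → v ∉ f := by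
  rintro e ⟨d, rfl⟩ f ⟨d', rfl⟩ hef v hv hv'
  have hdd : d ≠ d' := fun c => hef (by rw [c])
  rw [mEdge, Sym2.mem_iff] at hv hv'
  rcases hv with rfl | rfl <;> rcases hv' with h | h <;>
    exact upd01_ne hdd (by decide) h

end Assembly

section Transfer

open Function

variable {k : ℕ} [NeZero k]

/-- Gray code map -/
def grayFun (f : Bool → Bool) : ZMod 4 :=
  if f false then (if f true then 2 else 1) else (if f true then 3 else 0)

def grayInv (x : ZMod 4) (c : Bool) : Bool :=
  if c then decide (x = 2 ∨ x = 3) else decide (x = 1 ∨ x = 2)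

def grayEquiv : (Bool → Bool) ≃ ZMod 4 where
  toFun := grayFun
  invFun := grayInv
  left_inv := by decide
  right_inv := by decide

/-- key property of the Gray code: one-bit changes correspond to ±1 steps -/
lemma gray_adj (u w : Bool → Bool) :
    (∃! c, u c ≠ w c) ↔ (grayFun u = grayFun w + 1 ∨ grayFun w = grayFun u + 1) := by
  revert u w; simp only [ExistsUnique]; decide

lemma gray_eq (u w : Bool → Bool) : (∀ c, u c = w c) ↔ grayFun u = grayFun w := by
  revert u w; decide

lemma existsUnique_prod_iff {α β : Type*} (P : α × β → Prop) :
    (∃! p, P p) ↔ ∃ a, (∃! b, P (a, b)) ∧ ∀ a' b, a' ≠ a → ¬P (a', b) := by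
  constructor
  · rintro ⟨⟨a, b⟩, hP, hu⟩
    refine ⟨a, ⟨b, hP, fun b' hb' => ?_⟩, fun a' b' ha' hP' => ?_⟩
    · exact (Prod.ext_iff.mp (hu (a, b') hb')).2
    · exact ha' (congrArg Prod.fst (hu (a', b') hP'))
  · rintro ⟨a, ⟨b, hb, hub⟩, hother⟩
    refine ⟨(a, b), hb, ?_⟩
    rintro ⟨a', b'⟩ hP'
    rcases eq_or_ne a' a with rfl | ha'
    · rw [hub b' hP']
    · exact absurd hP' (hother a' b' ha')

lemma update_char {G F : Wt k} {d : ZMod k} {a : ZMod 4} :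
    G = update F d a ↔ (G d = a ∧ ∀ l, l ≠ d → G l = F l) := by
  constructor
  · rintro rfl
    exact ⟨update_self _ _ _, fun l hl => update_of_ne hl _ _⟩
  · rintro ⟨h1, h2⟩
    funext l
    rcases eq_or_ne l d with rfl | hl
    · rw [update_self]; exact h1
    · rw [update_of_ne hl]; exact h2 l hl

variable (k) in
/-- index bijection -/
noncomputable def idxEquiv : Fin (2 * k) ≃ ZMod k × Bool :=
  Fintype.equivOfCardEq (by simp [ZMod.card]; ring)

variable (k) in
/-- the full vertex bijection -/
noncomputable def vEquiv : (Fin (2 * k) → Bool) ≃ Wt k :=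
  ((idxEquiv k).arrowCongr (Equiv.refl Bool)).trans
    ((Equiv.curry _ _ _).trans (Equiv.piCongrRight fun _ => grayEquiv))

lemma vEquiv_apply (x : Fin (2 * k) → Bool) (d : ZMod k) :
    vEquiv k x d = grayFun (fun c => x ((idxEquiv k).symm (d, c))) := rfl

/-- the central adjacency transfer -/
lemma adj_transfer (x y : Fin (2 * k) → Bool) :
    (∃! i, x i ≠ y i) ↔ (torus : SimpleGraph (Wt k)).Adj (vEquiv k x) (vEquiv k y) := by
  set u : ZMod k → Bool → Bool := fun d c => x ((idxEquiv k).symm (d, c)) with hu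
  set w : ZMod k → Bool → Bool := fun d c => y ((idxEquiv k).symm (d, c)) with hw
  set F := vEquiv k x with hF
  set G := vEquiv k y with hG
  have hFd : ∀ d, F d = grayFun (u d) := fun d => rfl
  have hGd : ∀ d, G d = grayFun (w d) := fun d => rfl
  have step1 : (∃! i, x i ≠ y i) ↔ ∃! p : ZMod k × Bool,
      x ((idxEquiv k).symm p) ≠ y ((idxEquiv k).symm p) :=
    Equiv.existsUnique_congr_left _
  refine Iff.trans step1 (Iff.trans (existsUnique_prod_iff _) ?_)
  have step2 : ∀ d : ZMod k,
      ((∃! c, u d c ≠ w d c) ∧ ∀ d' c, d' ≠ d → ¬(u d' c ≠ w d' c)) ↔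
      ((F d = G d + 1 ∨ G d = F d + 1) ∧ ∀ d', d' ≠ d → F d' = G d') := by
    intro d
    rw [gray_adj, ← hFd, ← hGd]
    constructor
    · rintro ⟨h1, h2⟩
      refine ⟨h1, fun d' hd' => ?_⟩
      rw [hFd, hGd, ← gray_eq]
      intro c
      have := h2 d' c hd'
      tauto
    · rintro ⟨h1, h2⟩
      refine ⟨h1, fun d' c hd' hne => ?_⟩
      have := (gray_eq (u d') (w d')).mpr (by rw [← hFd, ← hGd]; exact h2 d' hd') c
      exact hne this
  constructor
  · rintro ⟨d, hd⟩
    obtain ⟨h1, h2⟩ := (step2 d).mp hd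
    have hne : F ≠ G := by
      intro c
      rcases h1 with h | h
      · rw [c] at h; exact z4_ne_add_one _ h
      · rw [c] at h; exact z4_ne_add_one _ h
    refine ⟨hne, d, ?_⟩
    rcases h1 with h | h
    · exact Or.inr (update_char.mpr ⟨h, fun l hl => (h2 l hl)⟩)
    · exact Or.inl (update_char.mpr ⟨h, fun l hl => (h2 l hl).symm⟩)
  · rintro ⟨hne, d, hd⟩
    refine ⟨d, (step2 d).mpr ?_⟩
    rcases hd with hd | hd
    · rw [update_char] at hd
      exact ⟨Or.inr hd.1, fun d' hd' => (hd.2 d' hd').symm⟩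
    · rw [update_char] at hd
      exact ⟨Or.inl hd.1, fun d' hd' => hd.2 d' hd'⟩

end Transfer

section ComapTransfer

open Function

variable {α β : Type*}

lemma edgeSet_comap_eq (f : α → β) (G : SimpleGraph β) :
    (G.comap f).edgeSet = Sym2.map f ⁻¹' G.edgeSet := by
  ext e
  induction e with
  | _ a b =>
    simp only [SimpleGraph.mem_edgeSet, SimpleGraph.comap_adj, Set.mem_preimage,
      Sym2.map_pair_eq]

/-- the isomorphism between a graph and its comap along an equivalence -/
def comapIso (f : α ≃ β) (G : SimpleGraph β) : G.comap f ≃g G :=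
  { f with map_rel_iff' := Iff.rfl }

lemma comapIso_symm_apply (f : α ≃ β) (G : SimpleGraph β) (b : β) :
    (comapIso f G).symm b = f.symm b := rfl

lemma comapIso_apply (f : α ≃ β) (G : SimpleGraph β) (a : α) :
    comapIso f G a = f a := rfl

lemma isTree_comap (f : α ≃ β) (G : SimpleGraph β) (h : G.IsTree) : (G.comap f).IsTree := by
  constructor
  · rw [SimpleGraph.connected_iff]
    refine ⟨fun a b => ?_, ⟨f.symm (Classical.choice h.1.nonempty)⟩⟩
    have hr := h.1.preconnected (f a) (f b)
    have := hr.map (comapIso f G).symm.toHom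
    simpa [comapIso_symm_apply] using this
  · intro v c hc
    exact h.2 (c.map (comapIso f G).toHom) ((SimpleGraph.Walk.map_isCycle_iff_of_injective
      (f := (comapIso f G).toHom) f.injective).mpr hc)

/-- `Sym2.map` of an equivalence, as an equivalence -/
def sym2Equiv (f : α ≃ β) : Sym2 α ≃ Sym2 β where
  toFun := Sym2.map f
  invFun := Sym2.map f.symm
  left_inv := fun e => by
    rw [Sym2.map_map]
    have : (⇑f.symm ∘ ⇑f) = id := funext fun a => f.symm_apply_apply a
    rw [this, Sym2.map_id, id]
  right_inv := fun e => by
    rw [Sym2.map_map]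
    have : (⇑f ∘ ⇑f.symm) = id := funext fun a => f.apply_symm_apply a
    rw [this, Sym2.map_id, id]

end ComapTransfer

end HypDecomp

open SimpleGraph

/-- The `n`-dimensional hypercube graph `Q_n`: vertices are binary vectors of length `n`,
two vertices adjacent iff they differ in exactly one coordinate. -/
def hypercube (n : ℕ) : SimpleGraph (Fin n → Bool) where
  Adj x y := ∃! i, x i ≠ y i
  symm := by
    refine ⟨?_⟩
    rintro x y ⟨i, hi, hu⟩
    exact ⟨i, hi.symm, fun j hj => hu j hj.symm⟩
  loopless := by
    refine ⟨?_⟩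
    rintro x ⟨i, hi, -⟩
    exact hi rfl

/-- The edge set of `Q_{2k}` can be partitioned into `k` pairwise edge-disjoint spanning
trees together with a matching of size `k` (k pairwise non-adjacent edges). -/
theorem hypercube_decomposition_spanningTrees_matching (k : ℕ) (hk : 1 ≤ k) :
    ∃ (T : Fin k → SimpleGraph (Fin (2 * k) → Bool))
      (R : Set (Sym2 (Fin (2 * k) → Bool))),
      (∀ i, T i ≤ hypercube (2 * k) ∧ (T i).IsTree) ∧
      (Pairwise fun i j => Disjoint (T i).edgeSet (T j).edgeSet) ∧
      (∀ i, Disjoint (T i).edgeSet R) ∧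
      ((⋃ i, (T i).edgeSet) ∪ R = (hypercube (2 * k)).edgeSet) ∧
      R.ncard = k ∧
      (R.Pairwise fun e f => ∀ v, v ∈ e → v ∉ f) := by
  haveI : NeZero k := ⟨by omega⟩
  classical
  set E := HypDecomp.vEquiv k with hE
  -- the graph equality
  have hyeq : hypercube (2 * k) = SimpleGraph.comap E (HypDecomp.torus) := by
    ext x y
    exact HypDecomp.adj_transfer x y
  set C : Fin k → ZMod k := fun i => ((i : ℕ) : ZMod k) with hC
  have hCinj : Function.Injective C := by
    intro i j hij
    have h2 : (C i).val = (C j).val := congrArg ZMod.val hij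
    rw [hC] at h2
    simp only [ZMod.val_cast_of_lt i.isLt, ZMod.val_cast_of_lt j.isLt] at h2
    exact Fin.ext h2
  refine ⟨fun i => SimpleGraph.comap E (HypDecomp.treeG (C i)),
    Sym2.map E ⁻¹' HypDecomp.MSet, ?_, ?_, ?_, ?_, ?_, ?_⟩
  · intro i
    constructor
    · rw [hyeq]
      intro a b hab
      exact HypDecomp.treeG_le_torus (C i) hab
    · exact HypDecomp.isTree_comap E _ (HypDecomp.treeG_isTree (C i))
  · intro i j hij
    rw [HypDecomp.edgeSet_comap_eq, HypDecomp.edgeSet_comap_eq]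
    exact (HypDecomp.treeG_disjoint (fun c => hij (hCinj c))).preimage _
  · intro i
    rw [HypDecomp.edgeSet_comap_eq]
    exact (HypDecomp.treeG_MSet_disjoint (C i)).preimage _
  · have hsurj : ∀ j : ZMod k, ∃ i : Fin k, C i = j := by
      intro j
      exact ⟨⟨j.val, j.val_lt⟩, by rw [hC]; exact ZMod.natCast_rightInverse j⟩
    calc (⋃ i, (SimpleGraph.comap E (HypDecomp.treeG (C i))).edgeSet)
        ∪ Sym2.map E ⁻¹' HypDecomp.MSet
        = (⋃ j : ZMod k, Sym2.map E ⁻¹' (HypDecomp.treeG j).edgeSet)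
          ∪ Sym2.map E ⁻¹' HypDecomp.MSet := by
          congr 1
          apply Set.Subset.antisymm
          · refine Set.iUnion_subset fun i => ?_
            rw [HypDecomp.edgeSet_comap_eq]
            exact Set.subset_iUnion_of_subset (C i) le_rfl
          · refine Set.iUnion_subset fun j => ?_
            obtain ⟨i, rfl⟩ := hsurj j
            rw [← HypDecomp.edgeSet_comap_eq]
            exact Set.subset_iUnion_of_subset i le_rfl
      _ = Sym2.map E ⁻¹' ((⋃ j : ZMod k, (HypDecomp.treeG j).edgeSet) ∪ HypDecomp.MSet) := by
          rw [Set.preimage_union, Set.preimage_iUnion]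
      _ = (hypercube (2 * k)).edgeSet := by
          rw [HypDecomp.union_eq_torus, hyeq, HypDecomp.edgeSet_comap_eq]
  · have hR : Sym2.map E ⁻¹' HypDecomp.MSet
        = (HypDecomp.sym2Equiv E).symm '' HypDecomp.MSet := by
      rw [Equiv.image_eq_preimage_symm]
      rfl
    rw [hR, Set.ncard_image_of_injective _ (HypDecomp.sym2Equiv E).symm.injective]
    exact HypDecomp.MSet_ncard
  · intro e he f hf hef v hv hv'
    have he' : Sym2.map E e ∈ HypDecomp.MSet := he
    have hf' : Sym2.map E f ∈ HypDecomp.MSet := hf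
    have hne : Sym2.map E e ≠ Sym2.map E f := by
      intro c
      exact hef ((HypDecomp.sym2Equiv E).injective c)
    have := HypDecomp.MSet_pairwise he' hf' hne (E v) (Sym2.mem_map.mpr ⟨v, hv, rfl⟩)
    exact this (Sym2.mem_map.mpr ⟨v, hv', rfl⟩)
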